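/- In the one-relator group G = ⟨a, b | a^{b²} = a·a^{3b}⟩, the element [a, a^b] is a nontrivial element of ⋂_{n∈ℕ} γ_n(G). In particular G is not residually nilpotent. -/

import Mathlib

namespace OneRelatorLCS

/-- The relator `(b⁻²ab²)⁻¹ · a · (b⁻¹a³b)` in the free group on `a = of 0`, `b = of 1`,
expressing the relation `a^{b²} = a·a^{3b}` (with `x^y = y⁻¹xy`). -/
def rel : FreeGroup (Fin 2) :=
  ((FreeGroup.of 1)⁻¹ * (FreeGroup.of 1)⁻¹ * FreeGroup.of 0 * FreeGroup.of 1 * FreeGroup.of 1)⁻¹ *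
    FreeGroup.of 0 *
    ((FreeGroup.of 1)⁻¹ * (FreeGroup.of 0) ^ 3 * FreeGroup.of 1)

/-- The one-relator group `G = ⟨a, b | a^{b²} = a·a^{3b}⟩`. -/
abbrev G : Type := PresentedGroup ({rel} : Set (FreeGroup (Fin 2)))

def a : G := PresentedGroup.of 0
def b : G := PresentedGroup.of 1

/-- `[x,y] = x⁻¹y⁻¹xy`. -/
def cmt {H : Type*} [Group H] (x y : H) : H := x⁻¹ * y⁻¹ * x * y

open Subgroup
open scoped commutatorElement

lemma lcs_map_eq {Q Q' : Type*} [Group Q] [Group Q'] (f : Q →* Q')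
    (hf : Function.Surjective f) (n : ℕ) :
    ((⊤ : Subgroup Q).lowerCentralSeries n).map f = (⊤ : Subgroup Q').lowerCentralSeries n := by
  induction n with
  | zero =>
    simp only [Subgroup.lowerCentralSeries_zero]
    rw [← MonoidHom.range_eq_map]
    exact MonoidHom.range_eq_top.2 hf
  | succ n ih =>
    show (⁅(⊤ : Subgroup Q).lowerCentralSeries n, (⊤ : Subgroup Q)⁆).map f = ⁅(⊤ : Subgroup Q').lowerCentralSeries n, ⊤⁆
    rw [Subgroup.map_commutator, ih, ← MonoidHom.range_eq_map, MonoidHom.range_eq_top.2 hf]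

lemma nilpotent_quot_lcs {Q : Type*} [Group Q] (n : ℕ) :
    Group.IsNilpotent (Q ⧸ (⊤ : Subgroup Q).lowerCentralSeries n) := by
  rw [Subgroup.nilpotent_iff_lowerCentralSeries]
  refine ⟨n, ?_⟩
  rw [← lcs_map_eq (QuotientGroup.mk' _) (QuotientGroup.mk'_surjective _) n,
    Subgroup.map_eq_bot_iff, QuotientGroup.ker_mk']

open Subgroup

universe w
theorem expE (n : ℕ) : ∀ (H : Type w) [Group H] (e : ℕ),
    (⊤ : Subgroup H).lowerCentralSeries n = ⊥ →
    (∀ x : H, x ^ e ∈ ⁅(⊤ : Subgroup H), (⊤ : Subgroup H)⁆) →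
    ∀ x : H, x ^ e ^ n = 1 := by
  induction n with
  | zero =>
    intro H _ e hbot _ x
    have hx : x ∈ (⊥ : Subgroup H) := hbot ▸ Subgroup.mem_top x
    simpa using hx
  | succ n ih =>
    intro H _ e hbot hball x
    -- elements of γ_n are central
    have hcent : ∀ z ∈ (⊤ : Subgroup H).lowerCentralSeries n, ∀ g : H, z * g = g * z := by
      intro z hz g
      have h1 : ⁅z, g⁆ ∈ (⊤ : Subgroup H).lowerCentralSeries (n + 1) :=
        commutator_mem_commutator hz (Subgroup.mem_top g)
      rw [hbot, Subgroup.mem_bot] at h1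
      exact (commutatorElement_eq_one_iff_mul_comm.mp h1)
    -- claim A : every element of γ_n has exponent dividing e
    have hA : ∀ z ∈ (⊤ : Subgroup H).lowerCentralSeries n, z ^ e = 1 := by
      cases n with
      | zero =>
        intro z _
        have := hball z
        have h1 : (⁅(⊤ : Subgroup H), (⊤ : Subgroup H)⁆ : Subgroup H)
            = (⊤ : Subgroup H).lowerCentralSeries 1 := by
          rw [Subgroup.top_lowerCentralSeries_one, Subgroup.commutator_def]; rfl
        rw [h1, hbot, Subgroup.mem_bot] at this
        exact this
      | succ m =>
        -- generators of γ_{m+1} = ⁅γ_m, ⊤⁆ have exponent e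
        have hgen : ∀ p ∈ (⊤ : Subgroup H).lowerCentralSeries m, ∀ q : H, ⁅p, q⁆ ^ e = 1 := by
          intro p hp q
          have hval : ∀ g : H, ⁅p, g⁆ ∈ (⊤ : Subgroup H).lowerCentralSeries (m + 1) := fun g =>
            commutator_mem_commutator hp (Subgroup.mem_top g)
          have hhom : ∀ g h : H, ⁅p, g * h⁆ = ⁅p, g⁆ * ⁅p, h⁆ := by
            intro g h
            have swap : (p * h * p⁻¹ * h⁻¹) * g⁻¹ = g⁻¹ * (p * h * p⁻¹ * h⁻¹) := by
              have := hcent ⁅p, h⁆ (hval h) g⁻¹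
              rwa [commutatorElement_def] at this
            have e1 : p * (g * h) * p⁻¹ * (g * h)⁻¹
                = (p * g * p⁻¹) * ((p * h * p⁻¹ * h⁻¹) * g⁻¹) := by group
            rw [commutatorElement_def, commutatorElement_def, commutatorElement_def,
              e1, swap]
            group
          set φ : H →* H := MonoidHom.mk' (fun g => ⁅p, g⁆) hhom with hφ
          have hker : (⁅(⊤ : Subgroup H), (⊤ : Subgroup H)⁆ : Subgroup H) ≤ φ.ker := by
            rw [Subgroup.commutator_le]
            intro g1 _ g2 _
            have : φ ⁅g1, g2⁆ = ⁅φ g1, φ g2⁆ := map_commutatorElement φ g1 g2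
            rw [MonoidHom.mem_ker, this,
              commutatorElement_eq_one_iff_mul_comm]
            exact hcent (φ g1) (hval g1) (φ g2)
          have : ⁅p, q⁆ ^ e = φ (q ^ e) := by rw [map_pow]; rfl
          rw [this]
          exact hker (hball q)
        intro z hz
        have hz' : z ∈ (⁅(⊤ : Subgroup H).lowerCentralSeries m, (⊤ : Subgroup H)⁆ : Subgroup H) := hz
        rw [Subgroup.commutator_def] at hz'
        refine Subgroup.closure_induction
          (p := fun g _ => g ^ e = 1) ?_ ?_ ?_ ?_ hz'
        · rintro x ⟨p, hp, q, -, rfl⟩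
          exact hgen p hp q
        · simp
        · intro x y hx hy ihx ihy
          have hxm : x ∈ (⊤ : Subgroup H).lowerCentralSeries (m + 1) := by
            rw [show (⊤ : Subgroup H).lowerCentralSeries (m+1) = ⁅(⊤ : Subgroup H).lowerCentralSeries m, (⊤ : Subgroup H)⁆
              from rfl, Subgroup.commutator_def]
            exact hx
          have hcom : x * y = y * x := hcent x hxm y
          rw [(Commute.mul_pow hcom e), ihx, ihy, one_mul]
        · intro x _ ihx
          rw [inv_pow, ihx, inv_one]
    -- pass to the quotient by γ_n
    have hquot : (⊤ : Subgroup (H ⧸ (⊤ : Subgroup H).lowerCentralSeries n)).lowerCentralSeries n = ⊥ := by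
      rw [← lcs_map_eq (QuotientGroup.mk' ((⊤ : Subgroup H).lowerCentralSeries n))
        (QuotientGroup.mk'_surjective _) n,
        Subgroup.map_eq_bot_iff, QuotientGroup.ker_mk']
    have hballq : ∀ y : H ⧸ (⊤ : Subgroup H).lowerCentralSeries n,
        y ^ e ∈ (⁅(⊤ : Subgroup (H ⧸ (⊤ : Subgroup H).lowerCentralSeries n)), ⊤⁆ :
          Subgroup (H ⧸ (⊤ : Subgroup H).lowerCentralSeries n)) := by
      intro y
      obtain ⟨x, rfl⟩ := QuotientGroup.mk'_surjective ((⊤ : Subgroup H).lowerCentralSeries n) y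
      have h1 : (QuotientGroup.mk' ((⊤ : Subgroup H).lowerCentralSeries n)) (x ^ e)
          ∈ Subgroup.map (QuotientGroup.mk' ((⊤ : Subgroup H).lowerCentralSeries n)) ⁅(⊤ : Subgroup H), ⊤⁆ :=
        Subgroup.mem_map_of_mem _ (hball x)
      rw [Subgroup.map_commutator] at h1
      rw [← map_pow]
      exact Subgroup.commutator_mono le_top le_top h1
    have hq := ih (H ⧸ (⊤ : Subgroup H).lowerCentralSeries n) e hquot hballq
      ((QuotientGroup.mk' ((⊤ : Subgroup H).lowerCentralSeries n)) x)
    rw [← map_pow, QuotientGroup.mk'_apply] at hq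
    have hq2 : x ^ e ^ n ∈ (⊤ : Subgroup H).lowerCentralSeries n := (QuotientGroup.eq_one_iff _).mp hq
    rw [pow_succ, pow_mul]
    exact hA _ hq2

theorem key {Q : Type*} [Group Q] (hQ : Group.IsNilpotent Q) (α β : Q)
    (hrel : β⁻¹ * β⁻¹ * α * β * β = α * (β⁻¹ * α ^ 3 * β)) :
    α⁻¹ * (β⁻¹ * α * β)⁻¹ * α * (β⁻¹ * α * β) = 1 := by
  set α₁ : Q := β⁻¹ * α * β with hα₁
  set c : Q := α⁻¹ * α₁⁻¹ * α * α₁ with hcdef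
  have hcp : (β⁻¹ * α * β) ^ 3 = β⁻¹ * α ^ 3 * β := by
    simpa using conj_pow (a := β⁻¹) (b := α) (i := 3)
  have hrel' : β⁻¹ * α₁ * β = α * α₁ ^ 3 := by
    rw [hα₁, hcp, show β⁻¹ * (β⁻¹ * α * β) * β = β⁻¹ * β⁻¹ * α * β * β by group, hrel]
  set g : Q := β * α₁⁻¹ * α₁⁻¹ * α₁⁻¹ with hg
  have hconj : g⁻¹ * c * g = c⁻¹ := by
    have h1 : β⁻¹ * c * β = α₁⁻¹ * (β⁻¹ * α₁ * β)⁻¹ * α₁ * (β⁻¹ * α₁ * β) := by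
      rw [hcdef, hα₁]; group
    rw [hrel'] at h1
    have h2 : g⁻¹ * c * g = α₁ ^ 3 * (β⁻¹ * c * β) * (α₁⁻¹ * α₁⁻¹ * α₁⁻¹) := by
      rw [hg]; group
    rw [h2, h1, hcdef]; group
  have hc2 : ∀ k : ℕ, c ^ 2 ^ k ∈ (⊤ : Subgroup Q).lowerCentralSeries (k + 1) := by
    intro k; induction k with
    | zero =>
      have hceq : c = ⁅α⁻¹, α₁⁻¹⁆ := by rw [hcdef, commutatorElement_def]; group
      have : c ∈ (⁅(⊤ : Subgroup Q), (⊤ : Subgroup Q)⁆ : Subgroup Q) := by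
        rw [hceq]; exact commutator_mem_commutator (mem_top _) (mem_top _)
      simpa using this
    | succ k ihk =>
      have hx : g⁻¹ * c ^ 2 ^ k * g = (c ^ 2 ^ k)⁻¹ := by
        have : (g⁻¹ * c * g) ^ 2 ^ k = g⁻¹ * c ^ 2 ^ k * g := by
          have := conj_pow (a := g⁻¹) (b := c) (i := 2 ^ k)
          simpa using this
        rw [← this, hconj, inv_pow]
      have hmem : ⁅(c ^ 2 ^ k)⁻¹, g⁻¹⁆ ∈ (⊤ : Subgroup Q).lowerCentralSeries (k + 2) :=
        commutator_mem_commutator (inv_mem ihk) (mem_top _)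
      have heq : ⁅(c ^ 2 ^ k)⁻¹, g⁻¹⁆ = (c ^ 2 ^ k)⁻¹ * (g⁻¹ * c ^ 2 ^ k * g) := by
        rw [commutatorElement_def]; group
      rw [heq, hx] at hmem
      have : c ^ 2 ^ (k + 1) = ((c ^ 2 ^ k)⁻¹ * (c ^ 2 ^ k)⁻¹)⁻¹ := by
        rw [pow_succ, pow_mul]; group
    
      rw [this]
      exact inv_mem hmem
  obtain ⟨n₀, hn₀⟩ := Subgroup.nilpotent_iff_lowerCentralSeries.mp hQ
  have h2pow : c ^ 2 ^ n₀ = 1 := by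
    have h1 := hc2 n₀
    have h2le : (⊤ : Subgroup Q).lowerCentralSeries (n₀ + 1) ≤ (⊤ : Subgroup Q).lowerCentralSeries n₀ :=
      Subgroup.lowerCentralSeries_antitone (S := ⊤) (Nat.le_succ n₀)
    have h1' := h2le h1
    rwa [hn₀, Subgroup.mem_bot] at h1'

  -- the normal closure of α and its derived subgroup
  set N : Subgroup Q := Subgroup.normalClosure {α} with hN
  haveI hNnormal : N.Normal := Subgroup.normalClosure_normal
  set C : Subgroup Q := ⁅N, N⁆ with hC
  haveI hCnormal : C.Normal := Subgroup.commutator_normal N N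
  have hαN : α ∈ N := Subgroup.subset_normalClosure (Set.mem_singleton α)
  have hα₁N : α₁ ∈ N := by
    rw [hα₁]
    simpa using hNnormal.conj_mem α hαN β⁻¹
  have hcN : c ∈ N := by
    rw [hcdef]
    exact mul_mem (mul_mem (mul_mem (inv_mem hαN) (inv_mem hα₁N)) hαN) hα₁N
  set π : Q →* Q ⧸ C := QuotientGroup.mk' C with hπ
  have hπone : ∀ z : Q, π z = 1 ↔ z ∈ C := by
    intro z; rw [hπ, QuotientGroup.mk'_apply, QuotientGroup.eq_one_iff]
  have hmemcomm : ∀ x y : Q, x ∈ N → y ∈ N → Commute (π x) (π y) := by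
    intro x y hx hy
    apply commutatorElement_eq_one_iff_commute.mp
    rw [← map_commutatorElement, hπone]
    exact commutator_mem_commutator hx hy
  set u0 : Q ⧸ C := π α with hu0
  set u1 : Q ⧸ C := π α₁ with hu1
  set bb : Q ⧸ C := π β with hbb
  have hcomm01 : Commute u0 u1 := hmemcomm α α₁ hαN hα₁N
  set X : ℤ × ℤ → Q ⧸ C := fun p => u0 ^ p.1 * u1 ^ p.2 with hX
  have hxadd : ∀ p q : ℤ × ℤ, X (p + q) = X p * X q := by
    intro p q
    show u0 ^ (p.1 + q.1) * u1 ^ (p.2 + q.2) = (u0 ^ p.1 * u1 ^ p.2) * (u0 ^ q.1 * u1 ^ q.2)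
    rw [zpow_add, zpow_add]
    have hsw : u1 ^ p.2 * u0 ^ q.1 = u0 ^ q.1 * u1 ^ p.2 := (hcomm01.symm.zpow_zpow _ _).eq
    calc u0 ^ p.1 * u0 ^ q.1 * (u1 ^ p.2 * u1 ^ q.2)
        = u0 ^ p.1 * (u0 ^ q.1 * u1 ^ p.2) * u1 ^ q.2 := by group
      _ = u0 ^ p.1 * (u1 ^ p.2 * u0 ^ q.1) * u1 ^ q.2 := by rw [hsw]
      _ = u0 ^ p.1 * u1 ^ p.2 * (u0 ^ q.1 * u1 ^ q.2) := by group
  have hxzero : X (0, 0) = 1 := by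
    show u0 ^ (0:ℤ) * u1 ^ (0:ℤ) = 1
    simp
  have hxneg : ∀ p : ℤ × ℤ, X (-p) = (X p)⁻¹ := by
    intro p
    have h1 : X (p + -p) = X p * X (-p) := hxadd p (-p)
    have h2 : X (p + -p) = 1 := by rw [add_neg_cancel]; exact hxzero
    rw [h2] at h1
    exact ((inv_eq_of_mul_eq_one_right h1.symm).symm)
  have hu0c : bb⁻¹ * u0 * bb = u1 := by
    rw [hu0, hu1, hbb, hα₁]; simp [map_mul]
  have hu1c : bb⁻¹ * u1 * bb = u0 * u1 ^ (3:ℤ) := by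
    have h1 : bb⁻¹ * u1 * bb = π (β⁻¹ * α₁ * β) := by rw [hu1, hbb]; simp [map_mul]
    rw [h1, hrel']
    simp [map_mul, map_pow, hu0, hu1]
  have hconjzpow : ∀ (u : Q ⧸ C) (k : ℤ), bb⁻¹ * u ^ k * bb = (bb⁻¹ * u * bb) ^ k := by
    intro u k
    have := conj_zpow (a := bb⁻¹) (b := u) (i := k)
    simpa using this.symm
  have htau : ∀ p : ℤ × ℤ, bb⁻¹ * X p * bb = X (p.2, p.1 + 3 * p.2) := by
    intro p
    have h1 : bb⁻¹ * X p * bb = (bb⁻¹ * u0 ^ p.1 * bb) * (bb⁻¹ * u1 ^ p.2 * bb) := by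
      rw [hX]; group
    rw [h1, hconjzpow, hconjzpow, hu0c, hu1c]
    have hcm : Commute u0 (u1 ^ (3:ℤ)) := hcomm01.zpow_right 3
    rw [hcm.mul_zpow]
    show u1 ^ p.1 * (u0 ^ p.2 * (u1 ^ (3:ℤ)) ^ p.2) = u0 ^ p.2 * u1 ^ (p.1 + 3 * p.2)
    rw [← zpow_mul, zpow_add]
    have hsw : u1 ^ p.1 * u0 ^ p.2 = u0 ^ p.2 * u1 ^ p.1 := (hcomm01.symm.zpow_zpow _ _).eq
    calc u1 ^ p.1 * (u0 ^ p.2 * u1 ^ (3 * p.2))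
        = (u1 ^ p.1 * u0 ^ p.2) * u1 ^ (3 * p.2) := by group
      _ = (u0 ^ p.2 * u1 ^ p.1) * u1 ^ (3 * p.2) := by rw [hsw]
      _ = u0 ^ p.2 * (u1 ^ p.1 * u1 ^ (3 * p.2)) := by group
      _ = u0 ^ p.2 * (u1 ^ p.1 * u1 ^ (3 * p.2)) := rfl
  set σ : ℤ × ℤ → ℤ × ℤ := fun p => (p.2 - p.1, p.1 + 2 * p.2) with hσ
  have hσX : ∀ p : ℤ × ℤ, X (σ p) = ⁅(X p)⁻¹, bb⁻¹⁆ := by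
    intro p
    have h1 : σ p = (-p) + (p.2, p.1 + 3 * p.2) := by
      rw [hσ]; ext <;> simp <;> ring
    rw [h1, hxadd, hxneg, ← htau, commutatorElement_def]
    group
  have hmemX : ∀ (j : ℕ) (p : ℤ × ℤ), X (σ^[j] p) ∈ (⊤ : Subgroup (Q ⧸ C)).lowerCentralSeries j := by
    intro j
    induction j with
    | zero => intro p; exact mem_top _
    | succ j ih =>
      intro p
      rw [Function.iterate_succ_apply', hσX]
      exact commutator_mem_commutator (inv_mem (ih p)) (mem_top _)
  have hσsmul : ∀ (k : ℤ) (p : ℤ × ℤ), σ (k • p) = k • σ p := by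
    intro k p
    rw [hσ]
    ext <;> simp [Prod.smul_fst, Prod.smul_snd, smul_eq_mul] <;> ring
  have hitersmul : ∀ (j : ℕ) (k : ℤ) (p : ℤ × ℤ), σ^[j] (k • p) = k • σ^[j] p := by
    intro j
    induction j with
    | zero => intro k p; simp
    | succ j ih =>
      intro k p
      rw [Function.iterate_succ_apply, hσsmul, ih, Function.iterate_succ_apply]
  have hS : ∀ m : ℕ, ∃ p : ℤ × ℤ, σ^[2 * m] p = ((-9 : ℤ) ^ m, 0) := by
    intro m
    induction m with
    | zero => exact ⟨(1, 0), by simp⟩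
    | succ m ih =>
      obtain ⟨p, hp⟩ := ih
      refine ⟨(p.2 - 5 * p.1, p.1 - 2 * p.2), ?_⟩
      have h2 : σ (σ (p.2 - 5 * p.1, p.1 - 2 * p.2)) = (-9 : ℤ) • p := by
        rw [hσ]; ext <;> simp [Prod.smul_fst, Prod.smul_snd, smul_eq_mul] <;> ring
      have h3 : 2 * (m + 1) = (2 * m) + 1 + 1 := by ring
      rw [h3, Function.iterate_succ_apply, Function.iterate_succ_apply, h2, hitersmul, hp]
      have : (-9 : ℤ) ^ (m + 1) = (-9) * (-9 : ℤ) ^ m := by rw [pow_succ]; ring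
      ext
      · simp [smul_eq_mul, this]
      · simp
  haveI : Group.IsNilpotent Q := hQ
  haveI : Group.IsNilpotent (Q ⧸ C) := nilpotent_quotient_of_nilpotent C
  obtain ⟨m, hm⟩ := Subgroup.nilpotent_iff_lowerCentralSeries.mp (inferInstance : Group.IsNilpotent (Q ⧸ C))
  obtain ⟨p, hp⟩ := hS m
  have h4 : X ((-9 : ℤ) ^ m, 0) ∈ (⊤ : Subgroup (Q ⧸ C)).lowerCentralSeries (2 * m) := hp ▸ hmemX (2 * m) p
  have h5 : (⊤ : Subgroup (Q ⧸ C)).lowerCentralSeries (2 * m) ≤ (⊤ : Subgroup (Q ⧸ C)).lowerCentralSeries m :=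
    Subgroup.lowerCentralSeries_antitone (S := ⊤) (by omega)
  have h6 : X ((-9 : ℤ) ^ m, 0) = 1 := by
    have := h5 h4; rwa [hm, Subgroup.mem_bot] at this
  have h7 : α ^ ((-9 : ℤ) ^ m) ∈ C := by
    rw [← hπone, map_zpow]
    have : X ((-9 : ℤ) ^ m, 0) = (π α) ^ ((-9 : ℤ) ^ m) := by
      rw [hX]; show u0 ^ _ * u1 ^ (0:ℤ) = _; rw [zpow_zero, mul_one, hu0]
    rw [← this, h6]
  set e : ℕ := 81 ^ m with he
  have hαe : α ^ e ∈ C := by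
    have heq : ((e : ℕ) : ℤ) = (-9 : ℤ) ^ m * (-9 : ℤ) ^ m := by
      rw [he]; push_cast; rw [← mul_pow]; norm_num
    have h8 : α ^ ((e : ℕ) : ℤ) ∈ C := by
      rw [heq, zpow_mul]
      exact Subgroup.zpow_mem C h7 _
    rwa [zpow_natCast] at h8
  have hgenpow : ∀ x ∈ N, x ^ e ∈ C := by
    intro x hx
    have hx' : x ∈ Subgroup.closure (Group.conjugatesOfSet ({α} : Set Q)) := hx
    have hres : (π x) ^ e = 1 := by
      refine Subgroup.closure_induction (p := fun g _ => (π g) ^ e = 1) ?_ ?_ ?_ ?_ hx'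
      · intro z hz
        obtain ⟨a2, ha2, hicj⟩ := Group.mem_conjugatesOfSet_iff.mp hz
        rw [Set.mem_singleton_iff] at ha2; subst ha2
        obtain ⟨g2, rfl⟩ := isConj_iff.mp hicj
        rw [← map_pow, hπone, conj_pow]
        exact hCnormal.conj_mem _ hαe g2
      · simp
      · intro x y hxm hym ihx ihy
        have hcm : Commute (π x) (π y) := hmemcomm x y hxm hym
        rw [map_mul, hcm.mul_pow, ihx, ihy, one_mul]
      · intro x hxm ihx
        rw [map_inv, inv_pow, ihx, inv_one]
    rw [← hπone, map_pow]
    exact hres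
  haveI : Group.IsNilpotent ↥N := Subgroup.isNilpotent N
  obtain ⟨n', hn'⟩ := Subgroup.nilpotent_iff_lowerCentralSeries.mp (inferInstance : Group.IsNilpotent ↥N)
  have hCmap : C = Subgroup.map N.subtype ⁅(⊤ : Subgroup ↥N), ⊤⁆ := by
    rw [Subgroup.map_commutator, ← MonoidHom.range_eq_map, N.range_subtype]
  have hballN : ∀ y : ↥N, y ^ e ∈ (⁅(⊤ : Subgroup ↥N), ⊤⁆ : Subgroup ↥N) := by
    intro y
    have h1 : ((y : Q) ^ e) ∈ C := hgenpow (y : Q) y.2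
    rw [hCmap] at h1
    obtain ⟨z, hz, hze⟩ := h1
    have hz' : z = y ^ e := by
      apply Subtype.ext
      simpa using hze
    rwa [← hz']
  have hpowN := expE n' ↥N e hn' hballN ⟨c, hcN⟩
  have hc3 : c ^ e ^ n' = 1 := by
    have h9 := congrArg (N.subtype) hpowN
    simpa using h9
  have h10 : (3:ℕ) ^ (4 * (m * n')) = e ^ n' := by
    rw [he]
    have h81 : (81 : ℕ) = 3 ^ 4 := by norm_num
    rw [h81, ← pow_mul, ← pow_mul, ← mul_assoc]
  have h3pow : c ^ 3 ^ (4 * (m * n')) = 1 := by rw [h10]; exact hc3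


  show c = 1
  have hd2 := orderOf_dvd_of_pow_eq_one h2pow
  have hd3 := orderOf_dvd_of_pow_eq_one h3pow
  have hcop : Nat.Coprime (2 ^ n₀) (3 ^ (4 * (m * n'))) :=
    Nat.Coprime.pow _ _ (by norm_num)
  have hdvd1 : orderOf c ∣ 1 := by
    have := Nat.dvd_gcd hd2 hd3
    rwa [Nat.Coprime.gcd_eq_one hcop] at this
  exact orderOf_eq_one_iff.mp (Nat.dvd_one.mp hdvd1)

/-- In `G = ⟨a, b | a^{b²} = a·a^{3b}⟩`, the element `[a, a^b]` is a nontrivial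
element of `⋂_n γ_n(G)`; in particular `G` is not residually nilpotent. -/
theorem not_residually_nilpotent :
    cmt a (b⁻¹ * a * b) ≠ 1 ∧
      cmt a (b⁻¹ * a * b) ∈ ⨅ n : ℕ, (⊤ : Subgroup G).lowerCentralSeries n ∧
      (⨅ n : ℕ, (⊤ : Subgroup G).lowerCentralSeries n) ≠ ⊥ := by
  -- the defining relation in G
  have hrelG : b⁻¹ * b⁻¹ * a * b * b = a * (b⁻¹ * a ^ 3 * b) := by
    have h1 : (PresentedGroup.mk ({rel} : Set (FreeGroup (Fin 2))) rel : G) = 1 :=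
      (QuotientGroup.eq_one_iff _).mpr (Subgroup.subset_normalClosure (Set.mem_singleton _))
    have hmk : (PresentedGroup.mk ({rel} : Set (FreeGroup (Fin 2))) rel : G)
        = (b⁻¹ * b⁻¹ * a * b * b)⁻¹ * a * (b⁻¹ * a ^ 3 * b) := by
      simp only [rel, map_mul, map_inv, map_pow]
      rfl
    rw [hmk] at h1
    have h2 : (b⁻¹ * b⁻¹ * a * b * b)⁻¹ * (a * (b⁻¹ * a ^ 3 * b)) = 1 := by
      rw [← h1]; group
    exact inv_mul_eq_one.mp h2
  -- membership in every term of the lower central series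
  have hmem : ∀ n : ℕ, cmt a (b⁻¹ * a * b) ∈ (⊤ : Subgroup G).lowerCentralSeries n := by
    intro n
    set π : G →* G ⧸ (⊤ : Subgroup G).lowerCentralSeries n :=
      QuotientGroup.mk' ((⊤ : Subgroup G).lowerCentralSeries n) with hπ
    have hrelQ : (π b)⁻¹ * (π b)⁻¹ * (π a) * (π b) * (π b)
        = (π a) * ((π b)⁻¹ * (π a) ^ 3 * (π b)) := by
      have := congrArg π hrelG
      simpa [map_mul, map_inv, map_pow] using this
    have h0 := key (nilpotent_quot_lcs n) (π a) (π b) hrelQ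
    have h1 : π (cmt a (b⁻¹ * a * b)) = 1 := by
      simpa [cmt, map_mul, map_inv] using h0
    rw [hπ, QuotientGroup.mk'_apply] at h1
    exact (QuotientGroup.eq_one_iff _).mp h1
  -- nontriviality via a homomorphism to S₄
  have hf : ∀ r ∈ ({rel} : Set (FreeGroup (Fin 2))),
      FreeGroup.lift (![Equiv.swap 0 1 * Equiv.swap 1 2, Equiv.swap 2 3] :
        Fin 2 → Equiv.Perm (Fin 4)) r = 1 := by
    intro r hr
    rw [Set.mem_singleton_iff] at hr; subst hr
    simp only [rel, map_mul, map_inv, map_pow, FreeGroup.lift_apply_of,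
      Matrix.cons_val_zero, Matrix.cons_val_one, Matrix.head_cons]
    decide
  have hne : cmt a (b⁻¹ * a * b) ≠ 1 := by
    intro h
    have h2 := congrArg (PresentedGroup.toGroup hf) h
    rw [map_one] at h2
    have ha : (PresentedGroup.toGroup hf) a
        = (![Equiv.swap 0 1 * Equiv.swap 1 2, Equiv.swap 2 3] :
        Fin 2 → Equiv.Perm (Fin 4)) 0 := PresentedGroup.toGroup.of hf
    have hb : (PresentedGroup.toGroup hf) b
        = (![Equiv.swap 0 1 * Equiv.swap 1 2, Equiv.swap 2 3] :
        Fin 2 → Equiv.Perm (Fin 4)) 1 := PresentedGroup.toGroup.of hf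
    simp only [cmt, map_mul, map_inv, ha, hb, Matrix.cons_val_zero, Matrix.cons_val_one,
      Matrix.head_cons] at h2
    exact absurd h2 (by decide)
  refine ⟨hne, Subgroup.mem_iInf.mpr hmem, ?_⟩
  intro hbot
  have h3 := Subgroup.mem_iInf.mpr hmem
  rw [hbot, Subgroup.mem_bot] at h3
  exact hne h3

end OneRelatorLCS
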